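/- If X is a fully visible CAT(0) cube complex (in which every family of pairwise-crossing hyperplanes is finite), then X is an optical space: for every pair u ≠ v of (visible) 0-simplices of ∂X, there exists a bi-infinite combinatorial geodesic γ: ℝ → X such that W(γ((-∞,0])) represents u and W(γ([0,∞))) represents v. -/

import Mathlib

/-!
Combinatorial model of a CAT(0) cube complex via Sageev duality.

`V` is the set of 0-cubes, `H` the set of hyperplanes, and `side h x : Bool`
records which halfspace of the hyperplane `h` contains the 0-cube `x`.
The axioms say exactly that `V` is the set of consistent orientations of the
hyperplanes, each differing from a fixed one on finitely many hyperplanes;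
this is precisely the combinatorial data of (the 0-skeleton of) a CAT(0) cube
complex, together with its hyperplane structure.
-/
structure CCC where
  V : Type
  H : Type
  side : H → V → Bool
  nonempty_V : Nonempty V
  vertex_ext : ∀ x y : V, (∀ h, side h x = side h y) → x = y
  sep_finite : ∀ x y : V, {h : H | side h x ≠ side h y}.Finite
  halfspace_nonempty : ∀ h b, ∃ x, side h x = b
  hyp_inj : ∀ h h' : H, (∀ x, side h x = side h' x) → h = h'
  hyp_inj' : ∀ h h' : H, (∀ x, side h x = !(side h' x)) → h = h'
  realize : ∀ (o : H → Bool) (x : V),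
    (∀ h h', ∃ y, side h y = o h ∧ side h' y = o h') →
    {h : H | o h ≠ side h x}.Finite →
    ∃ y, ∀ h, side h y = o h

namespace CCC

variable (X : CCC)

/-- The combinatorial (1-skeleton) distance between 0-cubes: the number of
separating hyperplanes. -/
noncomputable def dist (x y : X.V) : ℕ := (X.sep_finite x y).toFinset.card

/-- Two 0-cubes are adjacent (joined by a 1-cube) iff exactly one hyperplane
separates them. -/
def Adj (x y : X.V) : Prop :=
  ∃ h, X.side h x ≠ X.side h y ∧ ∀ h', X.side h' x ≠ X.side h' y → h' = h

/-- Two hyperplanes cross iff all four quarter-spaces are nonempty. -/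
def Crosses (h h' : X.H) : Prop :=
  ∀ b b' : Bool, ∃ x, X.side h x = b ∧ X.side h' x = b'

/-- The hyperplane `h'` lies in the halfspace `b` of the hyperplane `h`. -/
def InHalf (h' h : X.H) (b : Bool) : Prop :=
  h' ≠ h ∧ ∃ c : Bool, ∀ x, X.side h x = !b → X.side h' x = c

/-- `h` separates the hyperplanes `h₁` and `h₂`. -/
def SepH (h h₁ h₂ : X.H) : Prop :=
  ∃ b : Bool, X.InHalf h₁ h b ∧ X.InHalf h₂ h (!b)

/-- Two distinct hyperplanes contact iff no third hyperplane separates them. -/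
def Contact (h h' : X.H) : Prop := h ≠ h' ∧ ¬ ∃ h'', X.SepH h'' h h'

/-- A facing triple: three distinct hyperplanes, each having a halfspace
containing the other two. -/
def FacingTriple (h₁ h₂ h₃ : X.H) : Prop :=
  h₁ ≠ h₂ ∧ h₁ ≠ h₃ ∧ h₂ ≠ h₃ ∧
  ∃ b₁ b₂ b₃ : Bool,
    X.InHalf h₂ h₁ b₁ ∧ X.InHalf h₃ h₁ b₁ ∧
    X.InHalf h₁ h₂ b₂ ∧ X.InHalf h₃ h₂ b₂ ∧
    X.InHalf h₁ h₃ b₃ ∧ X.InHalf h₂ h₃ b₃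

/-- A set of hyperplanes is inseparable if every hyperplane separating two of
its members belongs to it. -/
def Inseparable (U : Set X.H) : Prop :=
  ∀ u ∈ U, ∀ u' ∈ U, ∀ h, X.SepH h u u' → h ∈ U

/-- A set of hyperplanes is unidirectional if each member has a halfspace
containing only finitely many members. -/
def Unidirectional (U : Set X.H) : Prop :=
  ∀ u ∈ U, ∃ b : Bool, {h | h ∈ U ∧ X.InHalf h u b}.Finite

def NoFacingTriple (U : Set X.H) : Prop :=
  ∀ h₁ ∈ U, ∀ h₂ ∈ U, ∀ h₃ ∈ U, ¬ X.FacingTriple h₁ h₂ h₃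

/-- A unidirectional boundary set (UBS). -/
def IsUBS (U : Set X.H) : Prop :=
  U.Infinite ∧ X.Inseparable U ∧ X.Unidirectional U ∧ X.NoFacingTriple U

/-- Almost-equivalence: finite symmetric difference. -/
def AlmostEq (U U' : Set X.H) : Prop := (symmDiff U U').Finite

/-- A minimal UBS. -/
def MinUBS (U : Set X.H) : Prop :=
  X.IsUBS U ∧ ∀ U' ⊆ U, X.IsUBS U' → X.AlmostEq U U'

/-- The simplex (= almost-equivalence class of UBSs) represented by `U` is a
face of the simplex represented by `V`. -/
def FaceOf (U V : Set X.H) : Prop :=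
  ∃ U' V', X.IsUBS U' ∧ X.IsUBS V' ∧ X.AlmostEq U U' ∧ X.AlmostEq V V' ∧ U' ⊆ V'

/-- `U` decomposes, up to almost-equivalence, into `k` pairwise disjoint
minimal UBSs; i.e. the class of `U` is a `(k-1)`-simplex of `∂X`. -/
def HasDim (U : Set X.H) (k : ℕ) : Prop :=
  ∃ 𝒰 : Fin k → Set X.H, (∀ i, X.MinUBS (𝒰 i)) ∧
    (∀ i j, i ≠ j → Disjoint (𝒰 i) (𝒰 j)) ∧ X.AlmostEq U (⋃ i, 𝒰 i)

/-- No infinite family of pairwise-crossing hyperplanes. -/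
def NoInfiniteCrossing : Prop :=
  ∀ S : Set X.H, (∀ h ∈ S, ∀ h' ∈ S, h ≠ h' → X.Crosses h h') → S.Finite

def LocallyFinite : Prop := ∀ x : X.V, {y | X.Adj x y}.Finite

/-- A combinatorial geodesic ray (parameterized by its vertices). -/
def IsGeodesicRay (γ : ℕ → X.V) : Prop :=
  ∀ m n : ℕ, m ≤ n → X.dist (γ m) (γ n) = n - m

/-- A bi-infinite combinatorial geodesic. -/
def IsGeodesicLine (α : ℤ → X.V) : Prop :=
  ∀ m n : ℤ, m ≤ n → (X.dist (α m) (α n) : ℤ) = n - m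

/-- A combinatorial geodesic segment of length `n`. -/
def IsGeodSeg (c : ℕ → X.V) (n : ℕ) : Prop :=
  ∀ i j : ℕ, i ≤ j → j ≤ n → X.dist (c i) (c j) = j - i

/-- The set of hyperplanes crossing (dual to the 1-cubes of) the path `γ`. -/
def WSet (γ : ℕ → X.V) : Set X.H :=
  {h | ∃ n : ℕ, X.side h (γ n) ≠ X.side h (γ (n+1))}

/-- The 0-cubes of the carrier `N(h)` of the hyperplane `h`. -/
def carrier (h : X.H) : Set X.V :=
  {x | ∃ y, X.Adj x y ∧ X.side h x ≠ X.side h y}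

/-- An essential hyperplane: each halfspace contains 0-cubes arbitrarily far
from the carrier. -/
def EssentialHyp (h : X.H) : Prop :=
  ∀ b : Bool, ∀ n : ℕ, ∃ x, X.side h x = b ∧ ∀ y ∈ X.carrier h, n ≤ X.dist x y

/-- Combinatorial convexity of a set of 0-cubes (the 0-skeleton of a convex
subcomplex). -/
def IsConvexSet (S : Set X.V) : Prop :=
  ∀ x ∈ S, ∀ y ∈ S, ∀ z, X.dist x z + X.dist z y = X.dist x y → z ∈ S

/-- `x` and `y` are joined by a combinatorial path avoiding `S`. -/
def ReachAvoid (S : Set X.V) (x y : X.V) : Prop :=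
  ∃ (n : ℕ) (c : ℕ → X.V), c 0 = x ∧ c n = y ∧
    (∀ i < n, X.Adj (c i) (c (i+1))) ∧ ∀ i ≤ n, c i ∉ S

/-- No compact (finite) convex subcomplex disconnects `X`. -/
def CompactlyIndecomposable : Prop :=
  ∀ K : Set X.V, K.Finite → X.IsConvexSet K →
    ∀ x y : X.V, x ∉ K → y ∉ K → X.ReachAvoid K x y

/-- `γ` bounds an eighth-flat: some eighth-flat (the subcomplex of the standard
tiling of `[0,∞)²` below the graph of an unbounded nondecreasing function)
embeds isometrically and cubically in `X` with image containing `γ`. -/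
def BoundsEighthFlat (γ : ℕ → X.V) : Prop :=
  ∃ g : ℕ → ℕ, Monotone g ∧ (∀ N : ℕ, ∃ m, N ≤ g m) ∧
    ∃ e : {p : ℕ × ℕ // p.2 ≤ g p.1} → X.V,
      (∀ p q, X.dist (e p) (e q) = Nat.dist p.1.1 q.1.1 + Nat.dist p.1.2 q.1.2) ∧
      ∀ n : ℕ, ∃ p, e p = γ n

/-- An edge-chain in the contact graph. -/
def CChain (c : ℕ → X.H) (n : ℕ) : Prop := ∀ i < n, X.Contact (c i) (c (i+1))

/-- Distance in the contact graph `C(X)` (`⊤` if there is no path). -/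
noncomputable def cdist (h h' : X.H) : ℕ∞ :=
  sInf {e : ℕ∞ | ∃ (n : ℕ) (c : ℕ → X.H), c 0 = h ∧ c n = h' ∧ X.CChain c n ∧ e = n}

/-- An edge-chain in the crossing graph. -/
def XChain (c : ℕ → X.H) (n : ℕ) : Prop := ∀ i < n, X.Crosses (c i) (c (i+1))

/-- Distance in the crossing graph `Δ(X)`. -/
noncomputable def xdist (h h' : X.H) : ℕ∞ :=
  sInf {e : ℕ∞ | ∃ (n : ℕ) (c : ℕ → X.H), c 0 = h ∧ c n = h' ∧ X.XChain c n ∧ e = n}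

/-- Distance in the full subgraph `Λ(γ)` of the contact graph spanned by the
hyperplanes crossing `γ`. -/
noncomputable def ldist (γ : ℕ → X.V) (h h' : X.H) : ℕ∞ :=
  sInf {e : ℕ∞ | ∃ (n : ℕ) (c : ℕ → X.H), c 0 = h ∧ c n = h' ∧
    (∀ i ≤ n, c i ∈ X.WSet γ) ∧ X.CChain c n ∧ e = n}

/-- Two 0-simplices of `∂X` (represented by minimal UBSs) are adjacent in the
1-skeleton of `∂X`. -/
def BAdj (U V : Set X.H) : Prop :=
  X.MinUBS U ∧ X.MinUBS V ∧ ¬ X.AlmostEq U V ∧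
    ∃ W, X.IsUBS W ∧ X.FaceOf U W ∧ X.FaceOf V W

/-- Distance in the 1-skeleton of the simplicial boundary `∂X`, between the
0-simplices represented by the minimal UBSs `U` and `V`. -/
noncomputable def bdist (U V : Set X.H) : ℕ∞ :=
  sInf {e : ℕ∞ | ∃ (n : ℕ) (c : ℕ → Set X.H),
    X.AlmostEq (c 0) U ∧ X.AlmostEq (c n) V ∧ (∀ i ≤ n, X.MinUBS (c i)) ∧
    (∀ i < n, X.BAdj (c i) (c (i+1)) ∨ X.AlmostEq (c i) (c (i+1))) ∧ e = n}

/-- Diameter of the contact graph. -/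
noncomputable def cdiam : ℕ∞ := ⨆ (h : X.H) (h' : X.H), X.cdist h h'

/-- Diameter of the crossing graph. -/
noncomputable def xdiam : ℕ∞ := ⨆ (h : X.H) (h' : X.H), X.xdist h h'

/-- Diameter of the 1-skeleton of the simplicial boundary. -/
noncomputable def bdiam : ℕ∞ :=
  ⨆ (U : Set X.H) (V : Set X.H) (_ : X.MinUBS U) (_ : X.MinUBS V), X.bdist U V

/-- A consistent orientation of the hyperplanes: any two chosen halfspaces
intersect. -/
def Consistent (χ : X.H → Bool) : Prop :=
  ∀ h h', ∃ x, X.side h x = χ h ∧ X.side h' x = χ h'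

/-- The halfspace `b` of `h`, as a set of 0-cubes. -/
def Hs (h : X.H) (b : Bool) : Set X.V := {x | X.side h x = b}

/-- Every simplex of `∂X` is visible, i.e. represented by the set of
hyperplanes crossing some combinatorial geodesic ray. -/
def FullyVisible : Prop :=
  ∀ V, X.IsUBS V → ∃ γ : ℕ → X.V, X.IsGeodesicRay γ ∧ X.AlmostEq (X.WSet γ) V

/-- The halfspace `b` of `h` is shallow: it lies within uniformly bounded
distance of the carrier of `h`. -/
def ShallowHalf (h : X.H) (b : Bool) : Prop :=
  ∃ R : ℕ, ∀ x, X.side h x = b → ∃ y ∈ X.carrier h, X.dist x y ≤ R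

/-- An `r`-avoiding combinatorial path (with respect to the basepoint `x₀`)
of length `n` from `a` to `b`. -/
def AvoidPathLen (x₀ : X.V) (r : ℕ) (a b : X.V) (n : ℕ) : Prop :=
  ∃ c : ℕ → X.V, c 0 = a ∧ c n = b ∧
    (∀ i < n, X.Adj (c i) (c (i+1))) ∧ ∀ i ≤ n, r ≤ X.dist (c i) x₀

/-- Combinatorial geodesic completeness: for every (finite) maximal family of
pairwise-crossing hyperplanes and every choice of halfspaces, the intersection
of the chosen halfspaces contains 0-cubes arbitrarily far from the
intersection of the carriers. -/
def CombGeodComplete : Prop :=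
  ∀ (n : ℕ) (W : Fin n → X.H), Function.Injective W →
    (∀ i j, i ≠ j → X.Crosses (W i) (W j)) →
    (∀ h, ¬ ∀ i, X.Crosses h (W i)) →
    ∀ χ : Fin n → Bool, ∀ R : ℕ,
      ∃ x, (∀ i, X.side (W i) x = χ i) ∧
        ∀ y, (∀ i, y ∈ X.carrier (W i)) → R ≤ X.dist x y

/-- `X` decomposes as a product of two unbounded convex subcomplexes:
equivalently, the hyperplanes split into two parts, each member of one part
crossing each member of the other, both factors being unbounded. -/
def ProductDecomp : Prop :=
  ∃ H₁ H₂ : Set X.H, Disjoint H₁ H₂ ∧ H₁ ∪ H₂ = Set.univ ∧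
    (∀ h₁ ∈ H₁, ∀ h₂ ∈ H₂, X.Crosses h₁ h₂) ∧
    (∀ n : ℕ, ∃ x y : X.V, n ≤ ({h | X.side h x ≠ X.side h y} ∩ H₁).ncard) ∧
    (∀ n : ℕ, ∃ x y : X.V, n ≤ ({h | X.side h x ≠ X.side h y} ∩ H₂).ncard)

/-- `∂X` decomposes as the simplicial join of two disjoint nonempty
subcomplexes: the 0-simplices split into two nonempty parts, any 0-simplex of
one part spanning a 1-simplex with any 0-simplex of the other. -/
def JoinDecomp : Prop :=
  ∃ 𝒜₁ 𝒜₂ : Set (Set X.H),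
    (∀ U ∈ 𝒜₁, X.MinUBS U) ∧ (∀ U ∈ 𝒜₂, X.MinUBS U) ∧
    𝒜₁.Nonempty ∧ 𝒜₂.Nonempty ∧
    (∀ U U', U ∈ 𝒜₁ → X.MinUBS U' → X.AlmostEq U U' → U' ∈ 𝒜₁) ∧
    (∀ U U', U ∈ 𝒜₂ → X.MinUBS U' → X.AlmostEq U U' → U' ∈ 𝒜₂) ∧
    (∀ U, X.MinUBS U → U ∈ 𝒜₁ ∨ U ∈ 𝒜₂) ∧
    (∀ U ∈ 𝒜₁, ∀ V ∈ 𝒜₂, ¬ X.AlmostEq U V) ∧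
    (∀ U ∈ 𝒜₁, ∀ V ∈ 𝒜₂, ∃ W, X.IsUBS W ∧ X.FaceOf U W ∧ X.FaceOf V W)

/-! Relative versions of the hyperplane notions, for a (convex) subcomplex
with 0-cube set `S`; the hyperplanes of the subcomplex are the hyperplanes of
`X` crossing it. -/

/-- `h` crosses the subcomplex with 0-cubes `S`. -/
def CrossesSet (S : Set X.V) (h : X.H) : Prop :=
  ∃ x ∈ S, ∃ y ∈ S, X.side h x ≠ X.side h y

def InHalfOn (S : Set X.V) (h' h : X.H) (b : Bool) : Prop :=
  h' ≠ h ∧ ∃ c : Bool, ∀ x ∈ S, X.side h x = !b → X.side h' x = c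

def SepHOn (S : Set X.V) (h h₁ h₂ : X.H) : Prop :=
  X.CrossesSet S h ∧ ∃ b : Bool, X.InHalfOn S h₁ h b ∧ X.InHalfOn S h₂ h (!b)

def InseparableOn (S : Set X.V) (U : Set X.H) : Prop :=
  ∀ u ∈ U, ∀ u' ∈ U, ∀ h, X.SepHOn S h u u' → h ∈ U

def UnidirectionalOn (S : Set X.V) (U : Set X.H) : Prop :=
  ∀ u ∈ U, ∃ b : Bool, {h | h ∈ U ∧ X.InHalfOn S h u b}.Finite

def NoFacingTripleOn (S : Set X.V) (U : Set X.H) : Prop :=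
  ∀ h₁ ∈ U, ∀ h₂ ∈ U, ∀ h₃ ∈ U, ¬ (h₁ ≠ h₂ ∧ h₁ ≠ h₃ ∧ h₂ ≠ h₃ ∧
    ∃ b₁ b₂ b₃ : Bool,
      X.InHalfOn S h₂ h₁ b₁ ∧ X.InHalfOn S h₃ h₁ b₁ ∧
      X.InHalfOn S h₁ h₂ b₂ ∧ X.InHalfOn S h₃ h₂ b₂ ∧
      X.InHalfOn S h₁ h₃ b₃ ∧ X.InHalfOn S h₂ h₃ b₃)

/-- A UBS of the subcomplex with 0-cube set `S`. -/
def IsUBSOn (S : Set X.V) (U : Set X.H) : Prop :=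
  (∀ h ∈ U, X.CrossesSet S h) ∧ U.Infinite ∧ X.InseparableOn S U ∧
    X.UnidirectionalOn S U ∧ X.NoFacingTripleOn S U

def MinUBSOn (S : Set X.V) (U : Set X.H) : Prop :=
  X.IsUBSOn S U ∧ ∀ U' ⊆ U, X.IsUBSOn S U' → X.AlmostEq U U'

def FaceOfOn (S : Set X.V) (U V : Set X.H) : Prop :=
  ∃ U' V', X.IsUBSOn S U' ∧ X.IsUBSOn S V' ∧ X.AlmostEq U U' ∧ X.AlmostEq V V' ∧ U' ⊆ V'

def HasDimOn (S : Set X.V) (U : Set X.H) (k : ℕ) : Prop :=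
  ∃ 𝒰 : Fin k → Set X.H, (∀ i, X.MinUBSOn S (𝒰 i)) ∧
    (∀ i j, i ≠ j → Disjoint (𝒰 i) (𝒰 j)) ∧ X.AlmostEq U (⋃ i, 𝒰 i)

end CCC


open Classical

namespace CCC

variable (X : CCC)

def sep (x y : X.V) : Set X.H := {h | X.side h x ≠ X.side h y}

variable {X}

lemma sepFin (x y : X.V) : (X.sep x y).Finite := X.sep_finite x y

lemma dist_eq_ncard (x y : X.V) : X.dist x y = (X.sep x y).ncard := by
  rw [Set.ncard_eq_toFinset_card _ (sepFin x y)]; rfl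

lemma sep_comm (x y : X.V) : X.sep x y = X.sep y x := by
  ext h; simp [sep, ne_comm]

lemma sep_self (x : X.V) : X.sep x x = ∅ := by
  ext h; simp [sep]

lemma sep_eq_symmDiff (x y z : X.V) : X.sep x z = symmDiff (X.sep x y) (X.sep y z) := by
  ext h
  simp only [sep, Set.mem_setOf_eq, Set.mem_symmDiff]
  rcases Bool.eq_false_or_eq_true (X.side h x) with hx | hx <;>
    rcases Bool.eq_false_or_eq_true (X.side h y) with hy | hy <;>
    rcases Bool.eq_false_or_eq_true (X.side h z) with hz | hz <;>
    simp [hx, hy, hz]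

lemma eq_of_sep_empty {x y : X.V} (h : X.sep x y = ∅) : x = y := by
  apply X.vertex_ext
  intro g
  by_contra hg
  exact (Set.eq_empty_iff_forall_notMem.1 h g) hg

lemma dist_eq_zero_iff {x y : X.V} : X.dist x y = 0 ↔ x = y := by
  constructor
  · intro h
    apply eq_of_sep_empty
    rwa [dist_eq_ncard, Set.ncard_eq_zero (sepFin x y)] at h
  · rintro rfl; rw [dist_eq_ncard, sep_self, Set.ncard_empty]

end CCC

namespace CCC
variable {X : CCC}

/-- Step `i` of the path `c` flips exactly the hyperplane `f i`. -/
def Flip (c : ℕ → X.V) (f : ℕ → X.H) (i : ℕ) : Prop :=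
  X.side (f i) (c i) ≠ X.side (f i) (c (i+1)) ∧
  ∀ h, X.side h (c i) ≠ X.side h (c (i+1)) → h = f i

lemma Flip.sep_eq {c : ℕ → X.V} {f : ℕ → X.H} {i : ℕ} (h : Flip c f i) :
    X.sep (c i) (c (i+1)) = {f i} := by
  ext g
  simp only [sep, Set.mem_setOf_eq, Set.mem_singleton_iff]
  exact ⟨fun hg => h.2 g hg, fun hg => hg ▸ h.1⟩

lemma side_const {c : ℕ → X.V} {f : ℕ → X.H} {h : X.H} {a b : ℕ} (hab : a ≤ b)
    (hf : ∀ i, a ≤ i → i < b → Flip c f i)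
    (hne : ∀ i, a ≤ i → i < b → h ≠ f i) :
    X.side h (c a) = X.side h (c b) := by
  induction b, hab using Nat.le_induction with
  | base => rfl
  | succ b hab ih =>
    rw [ih (fun i h1 h2 => hf i h1 (by omega)) (fun i h1 h2 => hne i h1 (by omega))]
    by_contra hc
    exact hne b hab (by omega) ((hf b hab (by omega)).2 h hc)

lemma sep_subset_image {c : ℕ → X.V} {f : ℕ → X.H} {a b : ℕ} (hab : a ≤ b)
    (hf : ∀ i, a ≤ i → i < b → Flip c f i) :
    X.sep (c a) (c b) ⊆ f '' (Set.Ico a b) := by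
  intro h hh
  by_contra hc
  simp only [Set.mem_image, Set.mem_Ico, not_exists, not_and] at hc
  exact hh (side_const hab hf (fun i h1 h2 => by
    intro he; exact hc i ⟨h1, h2⟩ he.symm))

lemma sep_eq_image {c : ℕ → X.V} {f : ℕ → X.H} {a b : ℕ} (hab : a ≤ b)
    (hf : ∀ i, a ≤ i → i < b → Flip c f i)
    (hinj : Set.InjOn f (Set.Ico a b)) :
    X.sep (c a) (c b) = f '' (Set.Ico a b) := by
  refine subset_antisymm (sep_subset_image hab hf) ?_
  rintro h ⟨i, ⟨hi1, hi2⟩, rfl⟩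
  have h1 : X.side (f i) (c a) = X.side (f i) (c i) :=
    side_const hi1 (fun j hj1 hj2 => hf j hj1 (by omega))
      (fun j hj1 hj2 he => by
        have := hinj ⟨hi1, hi2⟩ ⟨by omega, by omega⟩ he
        omega)
  have h2 : X.side (f i) (c (i+1)) = X.side (f i) (c b) :=
    side_const (by omega) (fun j hj1 hj2 => hf j (by omega) hj2)
      (fun j hj1 hj2 he => by
        have := hinj ⟨hi1, hi2⟩ ⟨by omega, by omega⟩ he
        omega)
  have := (hf i hi1 hi2).1
  simp only [sep, Set.mem_setOf_eq]
  rw [h1, ← h2]; exact this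

lemma ncard_Ico (a b : ℕ) : (Set.Ico a b).ncard = b - a := by
  rw [← Finset.coe_Ico, Set.ncard_coe_finset, Nat.card_Ico]

lemma dist_eq_of_flips {c : ℕ → X.V} {f : ℕ → X.H} {a b : ℕ} (hab : a ≤ b)
    (hf : ∀ i, a ≤ i → i < b → Flip c f i)
    (hinj : Set.InjOn f (Set.Ico a b)) :
    X.dist (c a) (c b) = b - a := by
  rw [dist_eq_ncard, sep_eq_image hab hf hinj, Set.ncard_image_of_injOn hinj, ncard_Ico]

lemma ray_of_flips {c : ℕ → X.V} {f : ℕ → X.H} (hf : ∀ i, Flip c f i)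
    (hinj : Function.Injective f) : X.IsGeodesicRay c :=
  fun m n hmn => dist_eq_of_flips hmn (fun i h1 h2 => hf i)
    (Set.injOn_of_injective hinj)

lemma flips_injective {c : ℕ → X.V} {f : ℕ → X.H} (hgeo : X.IsGeodesicRay c)
    (hf : ∀ i, Flip c f i) : Function.Injective f := by
  intro i j hij
  by_contra hne
  wlog hlt : i < j generalizing i j
  · exact this hij.symm (Ne.symm hne) (by omega)
  have h1 : X.dist (c i) (c (j+1)) = j + 1 - i := hgeo i (j+1) (by omega)
  have h2 : X.sep (c i) (c (j+1)) ⊆ f '' (Set.Ico i (j+1)) :=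
    sep_subset_image (by omega) (fun k _ _ => hf k)
  have h3 : f '' (Set.Ico i (j+1)) = f '' (Set.Ico i j) := by
    have : Set.Ico i (j+1) = insert j (Set.Ico i j) := by
      ext k; simp only [Set.mem_Ico, Set.mem_insert_iff]; omega
    rw [this, Set.image_insert_eq, ← hij, Set.insert_eq_self.2 (Set.mem_image_of_mem f (Set.mem_Ico.mpr ⟨le_refl i, hlt⟩))]
  have h4 : (X.sep (c i) (c (j+1))).ncard ≤ j - i := by
    calc (X.sep (c i) (c (j+1))).ncard ≤ (f '' (Set.Ico i j)).ncard := by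
          exact Set.ncard_le_ncard (h3 ▸ h2) ((Set.finite_Ico i j).image f)
      _ ≤ (Set.Ico i j).ncard := Set.ncard_image_le (Set.finite_Ico i j)
      _ = j - i := ncard_Ico i j
  rw [dist_eq_ncard] at h1
  omega

lemma ray_flips {γ : ℕ → X.V} (hγ : X.IsGeodesicRay γ) :
    ∃ f : ℕ → X.H, (∀ i, Flip γ f i) ∧ Function.Injective f := by
  have step : ∀ i : ℕ, ∃ h : X.H, X.sep (γ i) (γ (i+1)) = {h} := by
    intro i
    have : X.dist (γ i) (γ (i+1)) = 1 := by
      have := hγ i (i+1) (by omega); omega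
    rw [dist_eq_ncard, Set.ncard_eq_one] at this
    exact this
  choose f hf using step
  have hflip : ∀ i, Flip γ f i := by
    intro i
    constructor
    · have : f i ∈ X.sep (γ i) (γ (i+1)) := (hf i) ▸ rfl
      exact this
    · intro h hh
      have : h ∈ X.sep (γ i) (γ (i+1)) := hh
      rwa [hf i, Set.mem_singleton_iff] at this
  exact ⟨f, hflip, flips_injective hγ hflip⟩

lemma wset_eq_range {γ : ℕ → X.V} {f : ℕ → X.H} (hf : ∀ i, Flip γ f i) :
    X.WSet γ = Set.range f := by
  ext h
  simp only [WSet, Set.mem_setOf_eq, Set.mem_range]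
  constructor
  · rintro ⟨n, hn⟩; exact ⟨n, ((hf n).2 h hn).symm⟩
  · rintro ⟨n, rfl⟩; exact ⟨n, (hf n).1⟩

end CCC

namespace CCC
variable {X : CCC}

lemma bool_resolve {a b c : Bool} (h1 : a ≠ b) (h2 : c ≠ b) : c = a := by
  cases a <;> cases b <;> cases c <;> simp_all

lemma hyp_eq_of_equiv {h g : X.H} {b b' : Bool}
    (he : ∀ w, X.side h w = b ↔ X.side g w = b') : h = g := by
  by_cases hbb : b = b'
  · subst hbb
    apply X.hyp_inj; intro w; have := he w
    cases hb : X.side h w <;> cases hg : X.side g w <;> cases b <;> simp_all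
  · apply X.hyp_inj'; intro w; have := he w
    cases hb : X.side h w <;> cases hg : X.side g w <;> cases b <;> cases b' <;> simp_all

/-- From `x ≠ y`, one can move from `x` one step towards `y`: flip a single
separating hyperplane. -/
lemma exists_flip_step {x y : X.V} (hne : x ≠ y) :
    ∃ (z : X.V) (h : X.H), h ∈ X.sep x y ∧ X.sep x z = {h} ∧
      X.sep z y = X.sep x y \ {h} := by
  set S := X.sep x y with hS
  have hSfin : S.Finite := sepFin x y
  have hSne : S.Nonempty := by
    rw [Set.nonempty_iff_ne_empty]
    intro h0
    exact hne (eq_of_sep_empty h0)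
  -- the "crossed before" preorder
  set R : X.H → X.H → Prop :=
    fun h g => ∀ w, X.side h w = X.side h y → X.side g w = X.side g y with hR
  obtain ⟨h, hhS, hmin⟩ := Set.exists_min_image S
    (fun h => (S ∩ {g | R h g}).ncard) hSfin hSne
  -- minimality: no g ∈ S, g ≠ h, with R h g
  have hkey : ∀ g ∈ S, g ≠ h → ¬ R h g := by
    intro g hgS hgh hRhg
    have hgnh : ¬ R g h := by
      intro hRgh
      exact hgh (hyp_eq_of_equiv (fun w => ⟨fun hw => hRhg w hw, fun hw => hRgh w hw⟩)).symm
    have hsub : S ∩ {g' | R g g'} ⊆ (S ∩ {g' | R h g'}) \ {h} := by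
      rintro g' ⟨hg'S, hg'R⟩
      refine ⟨⟨hg'S, fun w hw => hg'R w (hRhg w hw)⟩, ?_⟩
      intro he
      exact hgnh (he ▸ hg'R)
    have hmem : h ∈ S ∩ {g' | R h g'} := ⟨hhS, fun w hw => hw⟩
    have hlt : (S ∩ {g' | R g g'}).ncard < (S ∩ {g' | R h g'}).ncard := by
      calc (S ∩ {g' | R g g'}).ncard ≤ ((S ∩ {g' | R h g'}) \ {h}).ncard :=
            Set.ncard_le_ncard hsub (hSfin.inter_of_left _).diff
        _ < (S ∩ {g' | R h g'}).ncard := by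
            apply Set.ncard_lt_ncard _ (hSfin.inter_of_left _)
            exact ⟨Set.diff_subset, fun hsub' => (hsub' hmem).2 rfl⟩
    exact absurd (hmin g hgS) (by omega)
  -- build the new orientation
  set o : X.H → Bool := fun g => if g = h then X.side h y else X.side g x with ho
  have hcons : ∀ g g', ∃ w, X.side g w = o g ∧ X.side g' w = o g' := by
    have haux : ∀ g', g' ≠ h → ∃ w, X.side h w = X.side h y ∧ X.side g' w = X.side g' x := by
      intro g' hg'h
      by_cases hg'S : X.side g' y = X.side g' x
      · exact ⟨y, rfl, hg'S⟩
      · have hg'mem : g' ∈ S := fun hc => hg'S hc.symm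
        have hnk : ¬ ∀ w, X.side h w = X.side h y → X.side g' w = X.side g' y :=
          hkey g' hg'mem hg'h
        push_neg at hnk
        obtain ⟨w, hw1, hw2⟩ := hnk
        exact ⟨w, hw1, bool_resolve (fun hc => hg'S hc.symm) hw2⟩
    intro g g'
    by_cases hg : g = h <;> by_cases hg' : g' = h
    · subst hg; subst hg'; exact ⟨y, by simp [ho], by simp [ho]⟩
    · subst hg
      obtain ⟨w, hw1, hw2⟩ := haux g' hg'
      exact ⟨w, by simp [ho, hw1], by simp [ho, hg', hw2]⟩
    · subst hg'
      obtain ⟨w, hw1, hw2⟩ := haux g hg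
      exact ⟨w, by simp [ho, hg, hw2], by simp [ho, hw1]⟩
    · exact ⟨x, by simp [ho, hg], by simp [ho, hg']⟩
  have hfin : {g | o g ≠ X.side g x}.Finite := by
    apply Set.Finite.subset (Set.finite_singleton h)
    intro g hg
    simp only [Set.mem_setOf_eq, ho] at hg
    by_cases hc : g = h
    · simp [hc]
    · simp [hc] at hg
  obtain ⟨z, hz⟩ := X.realize o x hcons hfin
  refine ⟨z, h, hhS, ?_, ?_⟩
  · ext g
    simp only [sep, Set.mem_setOf_eq, Set.mem_singleton_iff]
    constructor
    · intro hg
      by_contra hc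
      rw [hz g, ho] at hg
      simp [hc] at hg
    · intro he
      rw [he, hz h, ho]
      simpa [hS, sep] using hhS
  · ext g
    simp only [sep, Set.mem_setOf_eq, Set.mem_diff, Set.mem_singleton_iff, hS]
    rw [hz g, ho]
    by_cases hc : g = h
    · simp [hc]
    · simp only [if_neg hc]
      tauto

lemma exists_seg [Nonempty X.H] (d : ℕ) : ∀ (x y : X.V), X.dist x y = d →
    ∃ (c : ℕ → X.V) (f : ℕ → X.H), c 0 = x ∧ c d = y ∧ (∀ i < d, Flip c f i) ∧
      Set.InjOn f (Set.Iio d) ∧ f '' (Set.Iio d) = X.sep x y := by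
  induction d with
  | zero =>
    intro x y hd
    rw [dist_eq_zero_iff] at hd
    subst hd
    exact ⟨fun _ => x, fun _ => Classical.arbitrary _, rfl, rfl,
      fun i hi => absurd hi (by omega), fun a ha => absurd ha (by simp),
      by rw [show (Set.Iio 0 : Set ℕ) = ∅ by ext; simp, Set.image_empty, sep_self]⟩
  | succ d ih =>
    intro x y hd
    have hne : x ≠ y := by
      intro he; rw [he, dist_eq_zero_iff.2 rfl] at hd; omega
    obtain ⟨z, h, hhS, hxz, hzy⟩ := exists_flip_step hne
    have hdz : X.dist z y = d := by
      rw [dist_eq_ncard, hzy]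
      have := Set.ncard_diff_singleton_add_one hhS (sepFin x y)
      rw [dist_eq_ncard] at hd
      omega
    obtain ⟨c', f', hc'0, hc'd, hflip', hinj', himg'⟩ := ih z y hdz
    refine ⟨fun i => match i with | 0 => x | (j+1) => c' j,
      fun i => match i with | 0 => h | (j+1) => f' j, rfl, hc'd, ?_, ?_, ?_⟩
    · intro i hi
      match i with
      | 0 =>
        constructor
        · have : h ∈ X.sep x (c' 0) := by rw [hc'0, hxz]; rfl
          exact this
        · intro g hg
          have : g ∈ X.sep x (c' 0) := hg
          rw [hc'0, hxz, Set.mem_singleton_iff] at this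
          exact this
      | (j+1) => exact hflip' j (by omega)
    · intro i hi j hj hij
      match i, j with
      | 0, 0 => rfl
      | 0, (k+1) =>
        exfalso
        have : f' k ∈ X.sep z y := by
          rw [← himg']; exact Set.mem_image_of_mem f' (by simp only [Set.mem_Iio] at hj ⊢; omega)
        rw [hzy] at this
        exact this.2 (show f' k = h from hij.symm)
      | (k+1), 0 =>
        exfalso
        have : f' k ∈ X.sep z y := by
          rw [← himg']; exact Set.mem_image_of_mem f' (by simp only [Set.mem_Iio] at hi ⊢; omega)
        rw [hzy] at this
        exact this.2 (show f' k = h from hij)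
      | (k+1), (l+1) =>
        have := hinj' (show k ∈ Set.Iio d by simp only [Set.mem_Iio] at hi ⊢; omega)
          (show l ∈ Set.Iio d by simp only [Set.mem_Iio] at hj ⊢; omega)
          (show f' k = f' l from hij)
        omega
    · ext g
      simp only [Set.mem_image, Set.mem_Iio]
      constructor
      · rintro ⟨i, hi, rfl⟩
        match i with
        | 0 => exact hhS
        | (j+1) =>
          have : f' j ∈ X.sep z y := by
            rw [← himg']; exact Set.mem_image_of_mem f' (by simp only [Set.mem_Iio]; omega)
          rw [hzy] at this
          exact this.1
      · intro hg
        by_cases hgh : g = h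
        · exact ⟨0, by omega, hgh.symm⟩
        · have : g ∈ X.sep z y := by rw [hzy]; exact ⟨hg, hgh⟩
          rw [← himg'] at this
          obtain ⟨j, hj, rfl⟩ := this
          simp only [Set.mem_Iio] at hj
          exact ⟨j+1, by omega, rfl⟩

end CCC

namespace CCC
variable {X : CCC}

lemma bool_flip {a b : Bool} (h : a ≠ b) : b = !a := by cases a <;> cases b <;> simp_all

/-- The eventual side of the hyperplane `h` along the ray `γ`. -/
noncomputable def evSide (X : CCC) (γ : ℕ → X.V) (h : X.H) : Bool :=
  if h ∈ X.WSet γ then !(X.side h (γ 0)) else X.side h (γ 0)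

section ray
variable {γ : ℕ → X.V} {f : ℕ → X.H}

lemma side_ray_of_not_mem (hf : ∀ i, Flip γ f i) {h : X.H} (hh : h ∉ Set.range f)
    (m : ℕ) : X.side h (γ m) = X.side h (γ 0) :=
  (side_const (Nat.zero_le m) (fun i _ _ => hf i)
    (fun i _ _ he => hh ⟨i, he.symm⟩)).symm

lemma side_ray (hf : ∀ i, Flip γ f i) (hinj : Function.Injective f) (t m : ℕ) :
    X.side (f t) (γ m) =
      if m ≤ t then X.side (f t) (γ 0) else !(X.side (f t) (γ 0)) := by
  by_cases hm : m ≤ t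
  · rw [if_pos hm]
    have : X.side (f t) (γ 0) = X.side (f t) (γ m) :=
      side_const (Nat.zero_le m) (fun i _ _ => hf i)
        (fun i _ hi he => by have := hinj he; omega)
    exact this.symm
  · rw [if_neg hm]
    have h0t : X.side (f t) (γ 0) = X.side (f t) (γ t) :=
      side_const (Nat.zero_le t) (fun i _ _ => hf i)
        (fun i _ hi he => by have := hinj he; omega)
    have hstep : X.side (f t) (γ (t+1)) = !(X.side (f t) (γ t)) := by
      have := (hf t).1
      cases ha : X.side (f t) (γ t) <;> cases hb : X.side (f t) (γ (t+1)) <;> simp_all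
    have htail : X.side (f t) (γ m) = X.side (f t) (γ (t+1))  := by
      refine (side_const (show t+1 ≤ m by omega) (fun i _ _ => hf i)
        (fun i hi _ he => by have := hinj he; omega)).symm
    rw [htail, hstep, h0t]

lemma evSide_of_not_mem (hf : ∀ i, Flip γ f i) {h : X.H} (hh : h ∉ Set.range f) :
    X.evSide γ h = X.side h (γ 0) := by
  rw [evSide, if_neg]
  rwa [wset_eq_range hf]

lemma evSide_of_mem (hf : ∀ i, Flip γ f i) (t : ℕ) :
    X.evSide γ (f t) = !(X.side (f t) (γ 0)) := by
  rw [evSide, if_pos]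
  rw [wset_eq_range hf]
  exact ⟨t, rfl⟩

lemma side_eventually (hf : ∀ i, Flip γ f i) (hinj : Function.Injective f) (h : X.H) :
    ∃ T, ∀ m, T ≤ m → X.side h (γ m) = X.evSide γ h := by
  by_cases hh : h ∈ Set.range f
  · obtain ⟨t, rfl⟩ := hh
    refine ⟨t+1, fun m hm => ?_⟩
    rw [side_ray hf hinj t m, if_neg (by omega), evSide_of_mem hf]
  · exact ⟨0, fun m _ => by rw [side_ray_of_not_mem hf hh, evSide_of_not_mem hf hh]⟩

/-- Rebasing a geodesic ray at an arbitrary basepoint `x`: there is a geodesic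
ray starting at `x` crossing exactly the hyperplanes whose side at `x` differs
from their eventual side along `γ`. -/
lemma rebase [Nonempty X.H] (hf : ∀ i, Flip γ f i) (hinj : Function.Injective f)
    (x : X.V) :
    ∃ (δ : ℕ → X.V) (g : ℕ → X.H), δ 0 = x ∧ (∀ i, Flip δ g i) ∧
      Function.Injective g ∧
      Set.range g = {h | X.side h x ≠ X.evSide γ h} := by
  -- choose k beyond all crossing times of hyperplanes separating x from γ 0
  have hfin : {t : ℕ | f t ∈ X.sep x (γ 0)}.Finite := by
    apply Set.Finite.preimage (Set.injOn_of_injective hinj) (sepFin x (γ 0))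
  obtain ⟨k0, hk0⟩ := hfin.bddAbove
  set k := k0 + 1 with hk
  have hklt : ∀ t, f t ∈ X.sep x (γ 0) → t < k := by
    intro t ht
    have := hk0 ht
    omega
  -- key disjointness: hyperplanes crossed by γ after k do not separate x and γ k
  have hdisj : ∀ m, k ≤ m → f m ∉ X.sep x (γ k) := by
    intro m hm hmem
    have hs : X.side (f m) (γ k) = X.side (f m) (γ 0) := by
      rw [side_ray hf hinj m k, if_pos hm]
    have : f m ∈ X.sep x (γ 0) := by
      simpa [sep, hs] using hmem
    have := hklt m this
    omega
  set d := X.dist x (γ k) with hd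
  obtain ⟨c, fs, hc0, hcd, hflip, hinjs, himg⟩ := exists_seg d x (γ k) rfl
  set δ : ℕ → X.V := fun n => if n < d then c n else γ (k + (n - d)) with hδ
  set g : ℕ → X.H := fun n => if n < d then fs n else f (k + (n - d)) with hg
  have hδle : ∀ n, n ≤ d → δ n = c n := by
    intro n hn
    by_cases h : n < d
    · simp [hδ, h]
    · have : n = d := by omega
      simp [hδ, this, hcd]
  have hδge : ∀ n, d ≤ n → δ n = γ (k + (n - d)) := by
    intro n hn
    by_cases h : n < d
    · have : n = d := by omega
      simp [hδ, this, hcd]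
    · simp [hδ, h]
  refine ⟨δ, g, by rw [hδle 0 (Nat.zero_le d), hc0], ?_, ?_, ?_⟩
  · -- flips
    intro i
    by_cases hi : i < d
    · have e1 : δ i = c i := hδle i (by omega)
      have e2 : δ (i+1) = c (i+1) := hδle (i+1) (by omega)
      have e3 : g i = fs i := by simp [hg, hi]
      rw [Flip, e1, e2, e3]
      exact hflip i hi
    · have e1 : δ i = γ (k + (i - d)) := hδge i (by omega)
      have e2 : δ (i+1) = γ (k + (i - d) + 1) := by
        rw [hδge (i+1) (by omega)]
        congr 1
        omega
      have e3 : g i = f (k + (i - d)) := by simp [hg, hi]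
      rw [Flip, e1, e2, e3]
      exact hf (k + (i - d))
  · -- injectivity
    intro i j hij
    have hmemseg : ∀ n, n < d → g n ∈ X.sep x (γ k) := by
      intro n hn
      rw [← himg]
      have : g n = fs n := by simp [hg, hn]
      rw [this]
      exact Set.mem_image_of_mem fs (Set.mem_Iio.2 hn)
    by_cases hi : i < d <;> by_cases hj : j < d
    · have e3 : g i = fs i := by simp [hg, hi]
      have e4 : g j = fs j := by simp [hg, hj]
      exact hinjs (Set.mem_Iio.2 hi) (Set.mem_Iio.2 hj) (by rw [← e3, ← e4, hij])
    · exfalso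
      have h1 := hmemseg i hi
      have e4 : g j = f (k + (j - d)) := by simp [hg, hj]
      refine hdisj (k + (j - d)) (by omega) ?_
      rw [← e4, ← hij]
      exact h1
    · exfalso
      have h1 := hmemseg j hj
      have e3 : g i = f (k + (i - d)) := by simp [hg, hi]
      refine hdisj (k + (i - d)) (by omega) ?_
      rw [← e3, hij]
      exact h1
    · have e3 : g i = f (k + (i - d)) := by simp [hg, hi]
      have e5 : f (k + (i - d)) = f (k + (j - d)) := by
        have e4 : g j = f (k + (j - d)) := by simp [hg, hj]
        rw [← e3, ← e4]
        exact hij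
      have := hinj e5
      omega
  · -- range
    ext h
    simp only [Set.mem_range, Set.mem_setOf_eq]
    constructor
    · rintro ⟨n, rfl⟩
      by_cases hn : n < d
      · -- segment hyperplane
        have hmem : g n ∈ X.sep x (γ k) := by
          rw [← himg]
          have : g n = fs n := by simp [hg, hn]
          rw [this]
          exact Set.mem_image_of_mem fs (Set.mem_Iio.2 hn)
        -- show evSide = side at γ k
        have hev : X.evSide γ (g n) = X.side (g n) (γ k) := by
          by_cases hr : g n ∈ Set.range f
          · obtain ⟨t, ht⟩ := hr
            rw [← ht, evSide_of_mem hf, side_ray hf hinj t k]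
            have htk : t < k := by
              by_contra hc
              exact hdisj t (by omega) (ht ▸ hmem)
            rw [if_neg (by omega)]
          · rw [evSide_of_not_mem hf hr, side_ray_of_not_mem hf hr k]
        rw [hev]
        exact hmem
      · -- tail hyperplane
        have e3 : g n = f (k + (n - d)) := by simp [hg, hn]
        rw [e3, evSide_of_mem hf]
        have hnot : f (k + (n - d)) ∉ X.sep x (γ 0) := by
          intro hc
          have := hklt _ hc
          omega
        have : X.side (f (k + (n - d))) x = X.side (f (k + (n - d))) (γ 0) := by
          by_contra hc
          exact hnot hc
        rw [this]
        simp
    · intro hA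
      by_cases hr : h ∈ Set.range f
      · obtain ⟨t, rfl⟩ := hr
        by_cases htk : t < k
        · -- crossed before k : in the segment
          have hsk : X.side (f t) (γ k) = !(X.side (f t) (γ 0)) := by
            rw [side_ray hf hinj t k, if_neg (by omega)]
          have hmem : f t ∈ X.sep x (γ k) := by
            rw [evSide_of_mem hf] at hA
            simp only [sep, Set.mem_setOf_eq, hsk]
            exact hA
          rw [← himg] at hmem
          obtain ⟨n, hn, hfn⟩ := hmem
          exact ⟨n, by simp [hg, Set.mem_Iio.1 hn, hfn]⟩
        · exact ⟨d + (t - k), by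
            have : ¬ (d + (t - k) < d) := by omega
            simp only [hg, if_neg this]
            congr 1
            omega⟩
      · -- not crossed at all : must separate x from γ k, in the segment
        have hev := evSide_of_not_mem hf hr
        have hmem : h ∈ X.sep x (γ k) := by
          simp only [sep, Set.mem_setOf_eq]
          rw [side_ray_of_not_mem hf hr, ← hev]
          exact hA
        rw [← himg] at hmem
        obtain ⟨n, hn, hfn⟩ := hmem
        exact ⟨n, by simp [hg, Set.mem_Iio.1 hn, hfn]⟩

end ray
end CCC

namespace CCC
variable {X : CCC}

def FlipZ (α : ℤ → X.V) (g : ℤ → X.H) (i : ℤ) : Prop :=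
  X.side (g i) (α i) ≠ X.side (g i) (α (i+1)) ∧
  ∀ h, X.side h (α i) ≠ X.side h (α (i+1)) → h = g i

lemma FlipZ.sep_eq {α : ℤ → X.V} {g : ℤ → X.H} {i : ℤ} (h : FlipZ α g i) :
    X.sep (α i) (α (i+1)) = {g i} := by
  ext a
  simp only [sep, Set.mem_setOf_eq, Set.mem_singleton_iff]
  exact ⟨fun ha => h.2 a ha, fun ha => ha ▸ h.1⟩

lemma symmDiff_singleton_not_mem {β : Type*} {s : Set β} {a : β} (h : a ∉ s) :
    symmDiff s {a} = insert a s := by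
  ext b
  simp only [Set.mem_symmDiff, Set.mem_singleton_iff, Set.mem_insert_iff]
  by_cases hb : b = a
  · subst hb; tauto
  · tauto

lemma sepZ_eq {α : ℤ → X.V} {g : ℤ → X.H} (hf : ∀ i, FlipZ α g i)
    (hinj : Function.Injective g) {m n : ℤ} (hmn : m ≤ n) :
    X.sep (α m) (α n) = g '' Set.Ico m n := by
  refine Int.le_induction (motive := fun n _ => X.sep (α m) (α n) = g '' Set.Ico m n) ?_ ?_ n hmn
  · simp [sep_self, Set.Ico_self]
  · intro n hmn ih
    have h1 : X.sep (α m) (α (n+1)) = symmDiff (X.sep (α m) (α n)) (X.sep (α n) (α (n+1))) :=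
      sep_eq_symmDiff _ _ _
    have h2 : (Set.Ico m (n+1) : Set ℤ) = insert n (Set.Ico m n) := by
      ext t; simp only [Set.mem_Ico, Set.mem_insert_iff]; omega
    have h3 : g n ∉ g '' Set.Ico m n := by
      rintro ⟨t, ht, hgt⟩
      have := hinj hgt
      simp only [Set.mem_Ico] at ht
      omega
    rw [h1, ih, (hf n).sep_eq, symmDiff_singleton_not_mem h3, h2, Set.image_insert_eq]

lemma ncard_Ico_int (m n : ℤ) : (Set.Ico m n).ncard = (n - m).toNat := by
  rw [← Finset.coe_Ico, Set.ncard_coe_finset, Int.card_Ico]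

lemma line_of_flipsZ {α : ℤ → X.V} {g : ℤ → X.H} (hf : ∀ i, FlipZ α g i)
    (hinj : Function.Injective g) : X.IsGeodesicLine α := by
  intro m n hmn
  rw [dist_eq_ncard, sepZ_eq hf hinj hmn, Set.ncard_image_of_injOn
    (Set.injOn_of_injective hinj), ncard_Ico_int]
  omega

end CCC

namespace CCC
variable (X : CCC)

variable {X}

lemma almostEq_trans {a b c : Set X.H} (h1 : X.AlmostEq a b) (h2 : X.AlmostEq b c) :
    X.AlmostEq a c :=
  (h1.union h2).subset (symmDiff_triangle a b c)

lemma almostEq_symm {a b : Set X.H} (h1 : X.AlmostEq a b) : X.AlmostEq b a := by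
  rw [AlmostEq, symmDiff_comm]; exact h1

lemma inter_finite {U U' : Set X.H} (hU : X.MinUBS U) (hU' : X.MinUBS U')
    (hne : ¬ X.AlmostEq U U') : (U ∩ U').Finite := by
  by_contra hinf
  have hUBS : X.IsUBS (U ∩ U') := by
    refine ⟨fun hfin => hinf hfin, ?_, ?_, ?_⟩
    · intro u hu u' hu' h hsep
      exact ⟨hU.1.2.1 u hu.1 u' hu'.1 h hsep, hU'.1.2.1 u hu.2 u' hu'.2 h hsep⟩
    · intro u hu
      obtain ⟨b, hb⟩ := hU.1.2.2.1 u hu.1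
      exact ⟨b, hb.subset (fun h hh => ⟨hh.1.1, hh.2⟩)⟩
    · intro h1 hh1 h2 hh2 h3 hh3
      exact hU.1.2.2.2 h1 hh1.1 h2 hh2.1 h3 hh3.1
  have h1 : X.AlmostEq U (U ∩ U') := hU.2 _ Set.inter_subset_left hUBS
  have h2 : X.AlmostEq U' (U ∩ U') := hU'.2 _ Set.inter_subset_right hUBS
  exact hne (almostEq_trans h1 (almostEq_symm h2))

lemma evSide_symmDiff (γ : ℕ → X.V) (x : X.V) :
    symmDiff {h | X.side h x ≠ X.evSide γ h} (X.WSet γ) ⊆ X.sep x (γ 0) := by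
  intro h hh
  rw [Set.mem_symmDiff] at hh
  rcases hh with ⟨h1, h2⟩ | ⟨h2, h1⟩
  · have he : X.evSide γ h = X.side h (γ 0) := by rw [evSide, if_neg h2]
    simp only [Set.mem_setOf_eq, he] at h1
    exact h1
  · have he : X.evSide γ h = !(X.side h (γ 0)) := by rw [evSide, if_pos h2]
    simp only [Set.mem_setOf_eq, not_not] at h1
    have : X.side h x = !(X.side h (γ 0)) := by rw [← he]; exact h1
    simp only [sep, Set.mem_setOf_eq, this]
    cases X.side h (γ 0) <;> simp

end CCC

namespace CCC

theorem fully_visible_optical' (X : CCC) (hfv : X.FullyVisible) :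
    ∀ U U' : Set X.H, X.MinUBS U → X.MinUBS U' → ¬ X.AlmostEq U U' →
      ∃ α : ℤ → X.V, X.IsGeodesicLine α ∧
        X.AlmostEq (X.WSet (fun n : ℕ => α (-(n : ℤ)))) U ∧
        X.AlmostEq (X.WSet (fun n : ℕ => α (n : ℤ))) U' := by
  intro U U' hU hU' hne
  have hH : Nonempty X.H := ⟨hU.1.1.nonempty.choose⟩
  obtain ⟨γ, hγray, hγU⟩ := hfv U hU.1
  obtain ⟨γ', hγ'ray, hγ'U'⟩ := hfv U' hU'.1
  obtain ⟨f, hf, hfinj⟩ := ray_flips hγray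
  obtain ⟨f', hf', hf'inj⟩ := ray_flips hγ'ray
  have hUU' := inter_finite hU hU' hne
  -- the two rays cross only finitely many common hyperplanes
  have hWW : (X.WSet γ ∩ X.WSet γ').Finite := by
    apply Set.Finite.subset ((hγU.union hγ'U').union hUU')
    rintro h ⟨h1, h2⟩
    by_cases hu : h ∈ U
    · by_cases hu' : h ∈ U'
      · exact Or.inr ⟨hu, hu'⟩
      · exact Or.inl (Or.inr (Set.mem_symmDiff.2 (Or.inl ⟨h2, hu'⟩)))
    · exact Or.inl (Or.inl (Set.mem_symmDiff.2 (Or.inl ⟨h1, hu⟩)))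
  set e : X.H → Bool := X.evSide γ with he_def
  set e' : X.H → Bool := X.evSide γ' with he'_def
  set D : Set X.H := {h | e h = e' h ∧ e h ≠ X.side h (γ 0)} with hD
  have hev : ∀ h, ∃ T, ∀ m, T ≤ m → X.side h (γ m) = e h := side_eventually hf hfinj
  have hev' : ∀ h, ∃ T, ∀ m, T ≤ m → X.side h (γ' m) = e' h := side_eventually hf' hf'inj
  have hDfin : D.Finite := by
    apply Set.Finite.subset ((sepFin (γ 0) (γ' 0)).union hWW)
    rintro h ⟨hee', hex⟩
    by_cases h1 : h ∈ X.WSet γ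
    · by_cases h2 : h ∈ X.WSet γ'
      · exact Or.inr ⟨h1, h2⟩
      · refine Or.inl ?_
        have hh : e' h = X.side h (γ' 0) := by rw [he'_def, evSide, if_neg h2]
        show X.side h (γ 0) ≠ X.side h (γ' 0)
        rw [← hh, ← hee']
        exact fun hc => hex hc.symm
    · exfalso
      have hh : e h = X.side h (γ 0) := by rw [he_def, evSide, if_neg h1]
      exact hex hh
  -- find a basepoint `x` from which the two ends diverge immediately
  set o : X.H → Bool := fun h => if h ∈ D then e h else X.side h (γ 0) with ho
  have haux : ∀ g', g' ∉ D → X.side g' (γ 0) = e g' ∨ X.side g' (γ 0) = e' g' := by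
    intro g' hg'
    by_contra hc
    push_neg at hc
    refine hg' ⟨bool_resolve (fun hh => hc.2 hh.symm) (fun hh => hc.1 hh.symm), ?_⟩
    exact fun hh => hc.1 hh.symm
  have hcons : ∀ g g', ∃ w, X.side g w = o g ∧ X.side g' w = o g' := by
    intro g g'
    by_cases hg : g ∈ D <;> by_cases hg' : g' ∈ D
    · obtain ⟨T1, hT1⟩ := hev g
      obtain ⟨T2, hT2⟩ := hev g'
      refine ⟨γ (max T1 T2), ?_, ?_⟩
      · rw [ho]; simp only [if_pos hg]; exact hT1 _ (le_max_left _ _)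
      · rw [ho]; simp only [if_pos hg']; exact hT2 _ (le_max_right _ _)
    · rcases haux g' hg' with hca | hca
      · obtain ⟨T1, hT1⟩ := hev g
        obtain ⟨T2, hT2⟩ := hev g'
        refine ⟨γ (max T1 T2), ?_, ?_⟩
        · rw [ho]; simp only [if_pos hg]; exact hT1 _ (le_max_left _ _)
        · rw [ho]; simp only [if_neg hg']; rw [hca]; exact hT2 _ (le_max_right _ _)
      · obtain ⟨T1, hT1⟩ := hev' g
        obtain ⟨T2, hT2⟩ := hev' g'
        refine ⟨γ' (max T1 T2), ?_, ?_⟩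
        · rw [ho]; simp only [if_pos hg]
          rw [hT1 _ (le_max_left _ _)]
          exact hg.1.symm
        · rw [ho]; simp only [if_neg hg']; rw [hca]; exact hT2 _ (le_max_right _ _)
    · rcases haux g hg with hca | hca
      · obtain ⟨T1, hT1⟩ := hev g
        obtain ⟨T2, hT2⟩ := hev g'
        refine ⟨γ (max T1 T2), ?_, ?_⟩
        · rw [ho]; simp only [if_neg hg]; rw [hca]; exact hT1 _ (le_max_left _ _)
        · rw [ho]; simp only [if_pos hg']; exact hT2 _ (le_max_right _ _)
      · obtain ⟨T1, hT1⟩ := hev' g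
        obtain ⟨T2, hT2⟩ := hev' g'
        refine ⟨γ' (max T1 T2), ?_, ?_⟩
        · rw [ho]; simp only [if_neg hg]; rw [hca]; exact hT1 _ (le_max_left _ _)
        · rw [ho]; simp only [if_pos hg']
          rw [hT2 _ (le_max_right _ _)]
          exact hg'.1.symm
    · exact ⟨(γ 0), by rw [ho]; simp only [if_neg hg], by rw [ho]; simp only [if_neg hg']⟩
  have hofin : {h | o h ≠ X.side h (γ 0)}.Finite := by
    apply hDfin.subset
    intro h hh
    simp only [Set.mem_setOf_eq, ho] at hh
    by_contra hc
    simp [hc] at hh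
  obtain ⟨x, hx⟩ := X.realize o (γ 0) hcons hofin
  -- the two "divergence sets" at x are disjoint
  have hABdisj : ∀ h, X.side h x ≠ e' h → X.side h x ≠ e h → False := by
    intro h hA hB
    by_cases hDh : h ∈ D
    · have : X.side h x = e h := by rw [hx h]; simp only [ho, if_pos hDh]
      exact hB this
    · have hxx : X.side h x = X.side h (γ 0) := by rw [hx h]; simp only [ho, if_neg hDh]
      rw [hxx] at hA hB
      refine hDh ⟨bool_resolve (fun hh => hA hh.symm) (fun hh => hB hh.symm), ?_⟩
      exact fun hh => hB hh.symm
  -- rays from x towards the two ends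
  obtain ⟨δ, gA, hδ0, hδflip, hgAinj, hgArange⟩ := rebase hf' hf'inj x
  obtain ⟨δ', gB, hδ'0, hδ'flip, hgBinj, hgBrange⟩ := rebase hf hfinj x
  -- the bi-infinite geodesic
  set α : ℤ → X.V := fun t => if 0 ≤ t then δ t.toNat else δ' (-t).toNat with hα
  set G : ℤ → X.H := fun t => if 0 ≤ t then gA t.toNat else gB (-(t+1)).toNat with hG
  have hflipZ : ∀ t, FlipZ α G t := by
    intro t
    by_cases ht : 0 ≤ t
    · have e1 : α t = δ t.toNat := by rw [hα]; simp only [if_pos ht]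
      have e2 : α (t+1) = δ (t.toNat + 1) := by
        have h2 : (t+1).toNat = t.toNat + 1 := by omega
        rw [hα]; simp only [if_pos (show (0:ℤ) ≤ t + 1 by omega), h2]
      have e3 : G t = gA t.toNat := by rw [hG]; simp only [if_pos ht]
      rw [FlipZ, e1, e2, e3]
      exact hδflip t.toNat
    · have e1 : α t = δ' (-t).toNat := by rw [hα]; simp only [if_neg ht]
      have hm : (-t).toNat = (-(t+1)).toNat + 1 := by omega
      have e2 : α (t+1) = δ' (-(t+1)).toNat := by
        by_cases ht1 : 0 ≤ t + 1
        · have h0 : t + 1 = 0 := by omega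
          rw [hα, h0]
          simp only [if_pos (le_refl (0:ℤ))]
          rw [show ((0:ℤ)).toNat = 0 from rfl, show (-(0:ℤ)).toNat = 0 from rfl, hδ0, hδ'0]
        · rw [hα]; simp only [if_neg ht1]
      have e3 : G t = gB ((-(t+1)).toNat) := by rw [hG]; simp only [if_neg ht]
      set m := (-(t+1)).toNat with hmdef
      constructor
      · rw [e1, e2, e3, hm]
        exact (hδ'flip m).1.symm
      · intro h hh
        rw [e1, e2, hm] at hh
        rw [e3]
        exact (hδ'flip m).2 h (Ne.symm hh)
  have hGinj : Function.Injective G := by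
    have hrA : ∀ t : ℤ, 0 ≤ t → X.side (G t) x ≠ e' (G t) := by
      intro t ht
      have : G t ∈ Set.range gA := by
        rw [hG]; simp only [if_pos ht]; exact ⟨t.toNat, rfl⟩
      rw [hgArange] at this
      exact this
    have hrB : ∀ t : ℤ, ¬ 0 ≤ t → X.side (G t) x ≠ e (G t) := by
      intro t ht
      have : G t ∈ Set.range gB := by
        rw [hG]; simp only [if_neg ht]; exact ⟨(-(t+1)).toNat, rfl⟩
      rw [hgBrange] at this
      exact this
    intro s t hst
    by_cases hs : 0 ≤ s <;> by_cases ht : 0 ≤ t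
    · have e3 : G s = gA s.toNat := by rw [hG]; simp only [if_pos hs]
      have e4 : G t = gA t.toNat := by rw [hG]; simp only [if_pos ht]
      have := hgAinj (show gA s.toNat = gA t.toNat by rw [← e3, ← e4, hst])
      omega
    · exact absurd (hst ▸ hrA s hs) (fun hc => hc (absurd (hrB t ht) (by
        rw [← hst]; intro h2; exact absurd (hrA s hs) (fun h3 => hABdisj (G s) h3 (hst ▸ h2)))))
    · exact absurd (hrA t ht) (fun hc => hABdisj (G t) hc (hst ▸ hrB s hs))
    · have e3 : G s = gB (-(s+1)).toNat := by rw [hG]; simp only [if_neg hs]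
      have e4 : G t = gB (-(t+1)).toNat := by rw [hG]; simp only [if_neg ht]
      have := hgBinj (show gB (-(s+1)).toNat = gB (-(t+1)).toNat by rw [← e3, ← e4, hst])
      omega
  have hline := line_of_flipsZ hflipZ hGinj
  -- identify the two halves
  have hposfun : (fun n : ℕ => α (n : ℤ)) = δ := by
    funext n
    rw [hα]
    simp only [if_pos (Int.natCast_nonneg n), Int.toNat_natCast]
  have hnegfun : (fun n : ℕ => α (-(n : ℤ))) = δ' := by
    funext n
    by_cases hn : n = 0
    · subst hn
      rw [hα]
      simp only [Nat.cast_zero, neg_zero, if_pos (le_refl (0:ℤ))]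
      rw [show ((0:ℤ)).toNat = 0 from rfl, hδ0, hδ'0]
    · rw [hα]
      have h1 : ¬ (0 ≤ -(n : ℤ)) := by omega
      simp only [if_neg h1, neg_neg, Int.toNat_natCast]
  have hAeq : X.AlmostEq (X.WSet δ) U' := by
    refine almostEq_trans (b := X.WSet γ') ?_ hγ'U'
    refine (sepFin x (γ' 0)).subset ?_
    rw [wset_eq_range hδflip, hgArange]
    exact evSide_symmDiff γ' x
  have hBeq : X.AlmostEq (X.WSet δ') U := by
    refine almostEq_trans (b := X.WSet γ) ?_ hγU
    refine (sepFin x (γ 0)).subset ?_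
    rw [wset_eq_range hδ'flip, hgBrange]
    exact evSide_symmDiff γ x
  exact ⟨α, hline, by rw [hnegfun]; exact hBeq, by rw [hposfun]; exact hAeq⟩

end CCC


/-- Theorem 4.19 (optical spaces).  A fully visible CAT(0) cube complex is an
optical space: any two distinct 0-simplices of `∂X` (represented by
non-almost-equivalent minimal UBSs `U, U'`) form a visible pair, i.e. are the
two ends of a bi-infinite combinatorial geodesic. -/
theorem fully_visible_optical (X : CCC) (hX : X.NoInfiniteCrossing)
    (hfv : X.FullyVisible) :
    ∀ U U' : Set X.H, X.MinUBS U → X.MinUBS U' → ¬ X.AlmostEq U U' →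
      ∃ α : ℤ → X.V, X.IsGeodesicLine α ∧
        X.AlmostEq (X.WSet (fun n : ℕ => α (-(n : ℤ)))) U ∧
        X.AlmostEq (X.WSet (fun n : ℕ => α (n : ℤ))) U' := by
  exact CCC.fully_visible_optical' X hfv
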